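/- With notation as in the formal Demazure calculus, the push-pull element Y_α = 1/x_{−α} + (1/x_α) δ_{s_α} satisfies Y_α² = κ_α Y_α, where κ_α = 1/x_α + 1/x_{−α}. -/

import Mathlib

/-!
STATEMENT 9: In the formal Demazure calculus, the formal push-pull element
Y_α = (1/x_{−α}) δ_e + (1/x_α) δ_{s_α} of the twisted group algebra Q_W
satisfies Y_α² = κ_α Y_α, where κ_α = 1/x_α + 1/x_{−α}.
Setting: Q is the localization of S = R[[Λ]]_F at all x_β (β a root), so x_α and
x_{−α} are units of Q; W acts on Q by ring automorphisms φ, s_α is the simple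
reflection (an involution), and s_α(x_α) = x_{−α}.
Q_W is modelled as `W → Q` with the twisted multiplication.
-/

noncomputable section
open scoped Classical

def twMul {Q : Type*} [CommRing Q] {W : Type*} [Group W] [Fintype W]
    (φ : W →* RingAut Q) (f g : W → Q) : W → Q :=
  fun w => ∑ u : W, f u * φ u (g (u⁻¹ * w))

def tdelta {Q : Type*} [CommRing Q] {W : Type*} [Group W] (w : W) (q : Q) : W → Q :=
  fun v => if v = w then q else 0

lemma twMul_delta_delta {Q : Type*} [CommRing Q] {W : Type*} [Group W] [Fintype W]
    (φ : W →* RingAut Q) (u v : W) (q r : Q) :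
    twMul φ (tdelta u q) (tdelta v r) = tdelta (u * v) (q * φ u r) := by
  funext w
  simp only [twMul, tdelta]
  rw [Finset.sum_eq_single u]
  · by_cases h : w = u * v
    · simp [h, mul_assoc]
    · have : ¬ (u⁻¹ * w = v) := fun hh => h (by rw [← hh]; group)
      simp [this, h]
  · intro b _ hb; simp [hb]
  · intro h; simp at h

lemma twMul_add_left {Q : Type*} [CommRing Q] {W : Type*} [Group W] [Fintype W]
    (φ : W →* RingAut Q) (f g h : W → Q) :
    twMul φ (f + g) h = twMul φ f h + twMul φ g h := by
  funext w; simp [twMul, add_mul, Finset.sum_add_distrib]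

lemma twMul_add_right {Q : Type*} [CommRing Q] {W : Type*} [Group W] [Fintype W]
    (φ : W →* RingAut Q) (f g h : W → Q) :
    twMul φ f (g + h) = twMul φ f g + twMul φ f h := by
  funext w; simp [twMul, mul_add, Finset.sum_add_distrib]

theorem push_pull_element_squared
    {Q : Type*} [CommRing Q] {W : Type*} [Group W] [Fintype W]
    (φ : W →* RingAut Q) (s : W) (hs : s * s = 1)
    (xa xna : Qˣ) (hswap : φ s (xa : Q) = (xna : Q)) :
    -- Y_α = (1/x_{−α}) δ_e + (1/x_α) δ_{s_α},  κ_α = 1/x_α + 1/x_{−α}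
    twMul φ (tdelta (1 : W) ((xna⁻¹ : Qˣ) : Q) + tdelta s ((xa⁻¹ : Qˣ) : Q))
        (tdelta (1 : W) ((xna⁻¹ : Qˣ) : Q) + tdelta s ((xa⁻¹ : Qˣ) : Q)) =
      (((xa⁻¹ : Qˣ) : Q) + ((xna⁻¹ : Qˣ) : Q)) •
        (tdelta (1 : W) ((xna⁻¹ : Qˣ) : Q) + tdelta s ((xa⁻¹ : Qˣ) : Q)) := by
  have one_ap : ∀ q : Q, (1 : RingAut Q) q = q := fun _ => rfl
  have hs' : φ s ((xna : Q)) = (xa : Q) := by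
    have h : φ (s * s) (xa : Q) = (xa : Q) := by rw [hs, map_one, one_ap]
    rw [map_mul] at h
    have h2 : φ s (φ s (xa : Q)) = (xa : Q) := h
    rwa [hswap] at h2
  have ha : φ s (((xna⁻¹ : Qˣ) : Q)) = ((xa⁻¹ : Qˣ) : Q) := by
    have h : φ s ((xna : Q)) * φ s (((xna⁻¹ : Qˣ) : Q)) = 1 := by
      rw [← map_mul]; simp
    rw [hs'] at h
    rw [← mul_one ((xa⁻¹ : Qˣ) : Q), ← h, ← mul_assoc, Units.inv_mul, one_mul]
  have hb : φ s (((xa⁻¹ : Qˣ) : Q)) = ((xna⁻¹ : Qˣ) : Q) := by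
    have h : φ s ((xa : Q)) * φ s (((xa⁻¹ : Qˣ) : Q)) = 1 := by
      rw [← map_mul]; simp
    rw [hswap] at h
    rw [← mul_one ((xna⁻¹ : Qˣ) : Q), ← h, ← mul_assoc, Units.inv_mul, one_mul]
  set a := ((xna⁻¹ : Qˣ) : Q)
  set b := ((xa⁻¹ : Qˣ) : Q)
  rw [twMul_add_left, twMul_add_right, twMul_add_right,
    twMul_delta_delta, twMul_delta_delta, twMul_delta_delta, twMul_delta_delta,
    one_mul, mul_one, hs, map_one, one_ap, one_ap, ha, hb]
  funext w
  simp only [tdelta, Pi.add_apply, Pi.smul_apply, smul_eq_mul]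
  by_cases hse : s = 1
  · by_cases h1 : w = 1 <;> simp [hse, h1] <;> ring
  · by_cases h1 : w = 1 <;> by_cases h2 : w = s <;>
      simp [h1, h2, hse, Ne.symm hse] <;> ring

end
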